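/- arXiv:2109.11194 — 2 statements merged into one kernel-verified Lean document; each statement's English description precedes it below -/
import Mathlib

section
/- If for each k = 1,…,r the real numbers σ^k_1 ≥ … ≥ σ^k_{n'} ≥ 0 are the singular values of a matrix Â_k ∈ ℂ^{m×n} and τ^k_1 ≥ … ≥ τ^k_{p'} ≥ 0 are the singular values of a submatrix B̂_k ∈ ℂ^{p×q} of Â_k (obtained by deleting m−p rows and n−q columns), then the averages α_j = (1/r)∑_{k=1}^r σ^k_j and β_j = (1/r)∑_{k=1}^r τ^k_j satisfy α_j ≥ β_j for all j = 1,…,p'. -/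
open scoped BigOperators

/-- The `j`-th largest singular value (0-indexed) of a matrix, defined as the square
root of the `j`-th largest eigenvalue of `Aᴴ * A`. -/
noncomputable def sval {𝕜 : Type} [RCLike 𝕜] {m n : ℕ} (A : Matrix (Fin m) (Fin n) 𝕜)
    (j : Fin n) : ℝ :=
  Real.sqrt ((Matrix.isHermitian_conjTranspose_mul_self A).eigenvalues
    (Tuple.sort (Matrix.isHermitian_conjTranspose_mul_self A).eigenvalues j.rev))

open Matrix BigOperators Finset

namespace SvalAux
noncomputable section

/-- squared euclidean norm of a complex vector -/
def nsq {a : ℕ} (v : Fin a → ℂ) : ℝ := ∑ i, ‖v i‖^2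

lemma nsq_nonneg {a : ℕ} (v : Fin a → ℂ) : 0 ≤ nsq v :=
  Finset.sum_nonneg fun _ _ => by positivity

lemma nsq_pos {a : ℕ} {v : Fin a → ℂ} (hv : v ≠ 0) : 0 < nsq v := by
  rcases Function.ne_iff.1 hv with ⟨i, hi⟩
  have : (0:ℝ) < ‖v i‖^2 := by
    have := norm_pos_iff.2 hi
    positivity
  exact lt_of_lt_of_le this (Finset.single_le_sum (f := fun i => ‖v i‖^2)
    (fun _ _ => by positivity) (Finset.mem_univ i))

lemma nsq_eq_re_dot {a b : ℕ} (M : Matrix (Fin a) (Fin b) ℂ) (x : Fin b → ℂ) :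
    nsq (M *ᵥ x) = Complex.re (star x ⬝ᵥ ((Mᴴ * M) *ᵥ x)) := by
  rw [← Matrix.mulVec_mulVec, Matrix.dotProduct_mulVec, ← Matrix.star_mulVec]
  simp only [dotProduct, nsq, Complex.re_sum]
  refine Finset.sum_congr rfl fun i _ => ?_
  rw [Pi.star_apply, mul_comm, Complex.star_def, Complex.mul_conj]
  simp [Complex.normSq_eq_norm_sq, ← Complex.ofReal_pow]


lemma rayleigh_aux {b : ℕ} (H U : Matrix (Fin b) (Fin b) ℂ) (d : Fin b → ℝ)
    (hU : star U * U = 1) (hH : H = U * Matrix.diagonal ((↑) ∘ d) * star U)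
    (w : Fin b → ℂ) :
    Complex.re (star (U *ᵥ w) ⬝ᵥ (H *ᵥ (U *ᵥ w))) = ∑ l, d l * ‖w l‖^2 := by
  rw [hH, Matrix.mulVec_mulVec, Matrix.star_mulVec, mul_assoc, mul_assoc,
    hU, Matrix.mul_one, Matrix.dotProduct_mulVec, Matrix.vecMul_vecMul,
    ← Matrix.star_eq_conjTranspose, ← mul_assoc, hU, Matrix.one_mul]
  simp only [dotProduct, Matrix.vecMul_diagonal, Pi.star_apply, Complex.re_sum]
  refine Finset.sum_congr rfl fun l _ => ?_
  simp only [Function.comp_apply, Complex.star_def]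
  rw [mul_right_comm, mul_comm ((starRingEnd ℂ) (w l)) (w l), Complex.mul_conj]
  simp [Complex.normSq_eq_norm_sq, ← Complex.ofReal_pow,
    ← Complex.ofReal_mul]
  ring

lemma rayleigh {a b : ℕ} (M : Matrix (Fin a) (Fin b) ℂ) (w : Fin b → ℂ) :
    nsq (M *ᵥ (((Matrix.isHermitian_conjTranspose_mul_self M).eigenvectorUnitary :
        Matrix (Fin b) (Fin b) ℂ) *ᵥ w)) =
      ∑ l, (Matrix.isHermitian_conjTranspose_mul_self M).eigenvalues l * ‖w l‖^2 := by
  rw [nsq_eq_re_dot]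
  exact rayleigh_aux _ _ _
    (Unitary.star_mul_self_of_mem (Matrix.isHermitian_conjTranspose_mul_self M).eigenvectorUnitary.2)
    (Matrix.isHermitian_conjTranspose_mul_self M).spectral_theorem w

lemma re_dot_self {b : ℕ} (w : Fin b → ℂ) : Complex.re (star w ⬝ᵥ w) = nsq w := by
  simp only [dotProduct, Pi.star_apply, Complex.re_sum, nsq]
  refine Finset.sum_congr rfl fun l _ => ?_
  rw [Complex.star_def, mul_comm, Complex.mul_conj]
  simp [Complex.normSq_eq_norm_sq, ← Complex.ofReal_pow]

lemma nsq_mulVec_unitary {b : ℕ} (U : Matrix (Fin b) (Fin b) ℂ)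
    (hU : star U * U = 1) (w : Fin b → ℂ) : nsq (U *ᵥ w) = nsq w := by
  rw [nsq_eq_re_dot U w, ← Matrix.star_eq_conjTranspose, hU, Matrix.one_mulVec,
    re_dot_self]

lemma mulVec_injective_of_unitary {b : ℕ} (U : Matrix (Fin b) (Fin b) ℂ)
    (hU : star U * U = 1) : Function.Injective (fun w => U *ᵥ w : (Fin b → ℂ) → _) := by
  intro x y h
  have : star U *ᵥ (U *ᵥ x) = star U *ᵥ (U *ᵥ y) := by simp only at h; rw [h]
  simpa [Matrix.mulVec_mulVec, hU, Matrix.one_mulVec] using this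

/-- kernel of coordinate projections: dimension bound and membership -/
lemma exists_coord_ker {b : ℕ} (s : Finset (Fin b)) :
    ∃ C : Submodule ℂ (Fin b → ℂ), b - s.card ≤ Module.finrank ℂ C ∧
      ∀ w ∈ C, ∀ i ∈ s, w i = 0 := by
  classical
  let π : (Fin b → ℂ) →ₗ[ℂ] ({x // x ∈ s} → ℂ) :=
    LinearMap.pi fun i => LinearMap.proj i.1
  refine ⟨LinearMap.ker π, ?_, ?_⟩
  · have h1 := LinearMap.finrank_range_add_finrank_ker π
    have h2 : Module.finrank ℂ (Fin b → ℂ) = b := by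
      simp [Module.finrank_fintype_fun_eq_card]
    have h3 : Module.finrank ℂ (LinearMap.range π) ≤ s.card := by
      refine le_trans (Submodule.finrank_le _) ?_
      simp [Module.finrank_fintype_fun_eq_card]
    omega
  · intro w hw i hi
    have := congrFun (LinearMap.mem_ker.mp hw) ⟨i, hi⟩
    simpa [π] using this

lemma exists_ne_zero_mem_both {b : ℕ} (W T : Submodule ℂ (Fin b → ℂ))
    (h : b < Module.finrank ℂ W + Module.finrank ℂ T) :
    ∃ x, x ≠ 0 ∧ x ∈ W ∧ x ∈ T := by
  have h1 := Submodule.finrank_sup_add_finrank_inf_eq W T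
  have h2 : Module.finrank ℂ ↥(W ⊔ T) ≤ b := by
    refine le_trans (Submodule.finrank_le _) ?_
    simp [Module.finrank_fintype_fun_eq_card]
  have h3 : 0 < Module.finrank ℂ ↥(W ⊓ T) := by omega
  obtain ⟨x, hx⟩ := Module.finrank_pos_iff_exists_ne_zero.mp h3
  exact ⟨x.1, by simpa [Submodule.coe_eq_zero] using hx,
    (Submodule.mem_inf.mp x.2).1, (Submodule.mem_inf.mp x.2).2⟩

lemma card_filter_symm_lt {b : ℕ} (σ : Equiv.Perm (Fin b)) (t : Fin b) :
    (Finset.univ.filter fun l => t < σ.symm l).card = b - 1 - t.val := by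
  have himg : (Finset.univ.filter fun l => t < σ.symm l) = Finset.image σ (Finset.Ioi t) := by
    ext l
    simp only [Finset.mem_filter, Finset.mem_univ, true_and, Finset.mem_image,
      Finset.mem_Ioi]
    constructor
    · intro h; exact ⟨σ.symm l, h, σ.apply_symm_apply l⟩
    · rintro ⟨i, hi, rfl⟩; simpa using hi
  rw [himg, Finset.card_image_of_injective _ σ.injective, Fin.card_Ioi]

lemma card_filter_symm_gt {b : ℕ} (σ : Equiv.Perm (Fin b)) (t : Fin b) :
    (Finset.univ.filter fun l => σ.symm l < t).card = t.val := by
  have himg : (Finset.univ.filter fun l => σ.symm l < t) = Finset.image σ (Finset.Iio t) := by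
    ext l
    simp only [Finset.mem_filter, Finset.mem_univ, true_and, Finset.mem_image,
      Finset.mem_Iio]
    constructor
    · intro h; exact ⟨σ.symm l, h, σ.apply_symm_apply l⟩
    · rintro ⟨i, hi, rfl⟩; simpa using hi
  rw [himg, Finset.card_image_of_injective _ σ.injective, Fin.card_Iio]

/-- Courant–Fischer, upper bound direction. -/
lemma exists_rayleigh_le {a b : ℕ} (M : Matrix (Fin a) (Fin b) ℂ) (j : ℕ) (hj : j < b)
    (W : Submodule ℂ (Fin b → ℂ)) (hW : j + 1 ≤ Module.finrank ℂ W) :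
    ∃ x ∈ W, x ≠ 0 ∧ nsq (M *ᵥ x) ≤
      (Matrix.isHermitian_conjTranspose_mul_self M).eigenvalues
        (Tuple.sort (Matrix.isHermitian_conjTranspose_mul_self M).eigenvalues
          (Fin.rev ⟨j, hj⟩)) * nsq x := by
  classical
  set hH := Matrix.isHermitian_conjTranspose_mul_self M with hHdef
  set μ := hH.eigenvalues with hμdef
  set σ := Tuple.sort μ with hσdef
  set t : Fin b := Fin.rev ⟨j, hj⟩ with htdef
  have htval : (t : ℕ) = b - 1 - j := by
    simp [htdef, Fin.val_rev]; omega
  set s : Finset (Fin b) := Finset.univ.filter fun l => t < σ.symm l with hsdef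
  have hcards : s.card = j := by
    rw [hsdef, card_filter_symm_lt]; omega
  obtain ⟨C, hCrank, hCmem⟩ := exists_coord_ker s
  set U : Matrix (Fin b) (Fin b) ℂ := (hH.eigenvectorUnitary : Matrix (Fin b) (Fin b) ℂ)
    with hUdef
  have hsU : star U * U = 1 := Unitary.star_mul_self_of_mem hH.eigenvectorUnitary.2
  have hinj : Function.Injective (Matrix.mulVecLin U) :=
    mulVec_injective_of_unitary U hsU
  set T : Submodule ℂ (Fin b → ℂ) := Submodule.map (Matrix.mulVecLin U) C with hTdef
  have hTrank : Module.finrank ℂ T = Module.finrank ℂ C :=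
    (LinearEquiv.finrank_eq (Submodule.equivMapOfInjective _ hinj C)).symm
  obtain ⟨x, hx0, hxW, hxT⟩ := exists_ne_zero_mem_both W T (by
    rw [hTrank]; omega)
  obtain ⟨w, hwC, hwx⟩ := hxT
  refine ⟨x, hxW, hx0, ?_⟩
  have hxUw : x = U *ᵥ w := by rw [← hwx]; rfl
  have hmono := Tuple.monotone_sort μ
  rw [hxUw, rayleigh M w, nsq_mulVec_unitary U hsU w]
  simp only [nsq, Finset.mul_sum]
  refine Finset.sum_le_sum fun l _ => ?_
  by_cases hl : l ∈ s
  · rw [hCmem w hwC l hl]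
    simp
  · have hle : σ.symm l ≤ t := by
      by_contra hlt
      exact hl (Finset.mem_filter.mpr ⟨Finset.mem_univ _, lt_of_not_ge fun h => hlt h⟩)
    have : μ l ≤ μ (σ t) := by
      have := hmono hle
      simpa [Function.comp, ← hσdef, Equiv.apply_symm_apply] using this
    exact mul_le_mul_of_nonneg_right this (by positivity)

/-- Courant–Fischer, lower bound direction: a (j+1)-dimensional subspace on which the
Rayleigh quotient is at least the (j+1)-th largest eigenvalue. -/
lemma exists_subspace_rayleigh_ge {a b : ℕ} (M : Matrix (Fin a) (Fin b) ℂ) (j : ℕ)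
    (hj : j < b) :
    ∃ W : Submodule ℂ (Fin b → ℂ), j + 1 ≤ Module.finrank ℂ W ∧
      ∀ x ∈ W,
        (Matrix.isHermitian_conjTranspose_mul_self M).eigenvalues
          (Tuple.sort (Matrix.isHermitian_conjTranspose_mul_self M).eigenvalues
            (Fin.rev ⟨j, hj⟩)) * nsq x ≤ nsq (M *ᵥ x) := by
  classical
  set hH := Matrix.isHermitian_conjTranspose_mul_self M with hHdef
  set μ := hH.eigenvalues with hμdef
  set σ := Tuple.sort μ with hσdef
  set t : Fin b := Fin.rev ⟨j, hj⟩ with htdef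
  have htval : (t : ℕ) = b - 1 - j := by
    simp [htdef, Fin.val_rev]; omega
  set s : Finset (Fin b) := Finset.univ.filter fun l => σ.symm l < t with hsdef
  have hcards : s.card = b - 1 - j := by
    rw [hsdef, card_filter_symm_gt, htval]
  obtain ⟨C, hCrank, hCmem⟩ := exists_coord_ker s
  set U : Matrix (Fin b) (Fin b) ℂ := (hH.eigenvectorUnitary : Matrix (Fin b) (Fin b) ℂ)
    with hUdef
  have hsU : star U * U = 1 := Unitary.star_mul_self_of_mem hH.eigenvectorUnitary.2
  have hinj : Function.Injective (Matrix.mulVecLin U) :=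
    mulVec_injective_of_unitary U hsU
  refine ⟨Submodule.map (Matrix.mulVecLin U) C, ?_, ?_⟩
  · rw [← LinearEquiv.finrank_eq (Submodule.equivMapOfInjective _ hinj C)]
    omega
  · rintro x ⟨w, hwC, hwx⟩
    have hxUw : x = U *ᵥ w := by rw [← hwx]; rfl
    have hmono := Tuple.monotone_sort μ
    rw [hxUw, rayleigh M w, nsq_mulVec_unitary U hsU w]
    simp only [nsq, Finset.mul_sum]
    refine Finset.sum_le_sum fun l _ => ?_
    by_cases hl : l ∈ s
    · rw [hCmem w hwC l hl]
      simp
    · have hle : t ≤ σ.symm l := by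
        by_contra hlt
        exact hl (Finset.mem_filter.mpr ⟨Finset.mem_univ _, lt_of_not_ge fun h => hlt h⟩)
      have : μ (σ t) ≤ μ l := by
        have := hmono hle
        simpa [Function.comp, ← hσdef, Equiv.apply_symm_apply] using this
      exact mul_le_mul_of_nonneg_right this (by positivity)

section emb
variable {n q : ℕ}

/-- zero-padding embedding matrix -/
def emb (g : Fin q → Fin n) : Matrix (Fin n) (Fin q) ℂ :=
  Matrix.of fun i c => if g c = i then 1 else 0

lemma emb_mulVec_apply (g : Fin q → Fin n) (hg : Function.Injective g)
    (x : Fin q → ℂ) (c : Fin q) :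
    (emb g *ᵥ x) (g c) = x c := by
  simp only [emb, Matrix.mulVec, dotProduct, Matrix.of_apply]
  rw [Finset.sum_eq_single c]
  · simp
  · intro c' _ hc'
    simp [hg.ne hc']
  · simp

lemma emb_mulVec_zero (g : Fin q → Fin n) (x : Fin q → ℂ) (i : Fin n) (hi : i ∉ Set.range g) :
    (emb g *ᵥ x) i = 0 := by
  simp only [emb, Matrix.mulVec, dotProduct, Matrix.of_apply]
  refine Finset.sum_eq_zero fun c _ => ?_
  have : g c ≠ i := fun h => hi ⟨c, h⟩
  simp [this]

lemma nsq_emb (g : Fin q → Fin n) (hg : Function.Injective g) (x : Fin q → ℂ) : nsq (emb g *ᵥ x) = nsq x := by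
  classical
  unfold nsq
  rw [← Finset.sum_subset (Finset.subset_univ (Finset.image g Finset.univ))
    (fun i _ hi => by
      rw [emb_mulVec_zero g x i (by
        intro ⟨c, hc⟩
        exact hi (Finset.mem_image.mpr ⟨c, Finset.mem_univ c, hc⟩))]
      simp),
    Finset.sum_image (fun c _ c' _ h => hg h)]
  refine Finset.sum_congr rfl fun c _ => ?_
  rw [emb_mulVec_apply g hg]

lemma emb_injective (g : Fin q → Fin n) (hg : Function.Injective g) (x : Fin q → ℂ) (hx : emb g *ᵥ x = 0) : x = 0 := by
  funext c
  have := congrFun hx (g c)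
  rw [emb_mulVec_apply g hg] at this
  simpa using this

lemma mul_emb {m : ℕ} (g : Fin q → Fin n) (A : Matrix (Fin m) (Fin n) ℂ) :
    A * emb g = A.submatrix id g := by
  ext l c
  simp [Matrix.mul_apply, emb, Matrix.submatrix]

end emb

lemma nsq_submatrix_le {m n p q : ℕ} (A : Matrix (Fin m) (Fin n) ℂ)
    (f : Fin p → Fin m) (g : Fin q → Fin n) (hf : Function.Injective f)
    (x : Fin q → ℂ) :
    nsq ((A.submatrix f g) *ᵥ x) ≤ nsq ((A.submatrix id g) *ᵥ x) := by
  classical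
  unfold nsq
  have hterm : ∀ i : Fin p, ((A.submatrix f g) *ᵥ x) i = ((A.submatrix id g) *ᵥ x) (f i) := by
    intro i
    simp [Matrix.mulVec, dotProduct, Matrix.submatrix]
  calc ∑ i, ‖((A.submatrix f g) *ᵥ x) i‖^2
      = ∑ i ∈ Finset.image f Finset.univ, ‖((A.submatrix id g) *ᵥ x) i‖^2 := by
        rw [Finset.sum_image (fun c _ c' _ h => hf h)]
        exact Finset.sum_congr rfl fun i _ => by rw [hterm]
    _ ≤ ∑ i, ‖((A.submatrix id g) *ᵥ x) i‖^2 :=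
        Finset.sum_le_sum_of_subset_of_nonneg (Finset.subset_univ _)
          (fun i _ _ => by positivity)

/-- Main per-matrix inequality: singular values of a submatrix are dominated. -/
lemma sval_submatrix_le {m n p q : ℕ} (A : Matrix (Fin m) (Fin n) ℂ)
    (f : Fin p → Fin m) (g : Fin q → Fin n) (hf : Function.Injective f)
    (hg : Function.Injective g) (j : ℕ) (hjq : j < q) (hjn : j < n) :
    sval (A.submatrix f g) ⟨j, hjq⟩ ≤ sval A ⟨j, hjn⟩ := by
  classical
  obtain ⟨W, hWrank, hWlow⟩ := exists_subspace_rayleigh_ge (A.submatrix f g) j hjq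
  have hinj : Function.Injective (Matrix.mulVecLin (emb g)) := by
    intro x y hxy
    have : emb g *ᵥ (x - y) = 0 := by
      rw [Matrix.mulVec_sub]
      simpa [sub_eq_zero] using hxy
    have := emb_injective g hg _ this
    rwa [sub_eq_zero] at this
  set W' : Submodule ℂ (Fin n → ℂ) := Submodule.map (Matrix.mulVecLin (emb g)) W with hW'
  have hW'rank : j + 1 ≤ Module.finrank ℂ W' := by
    rw [hW', ← LinearEquiv.finrank_eq (Submodule.equivMapOfInjective _ hinj W)]
    exact hWrank
  obtain ⟨x, hxW', hx0, hray⟩ := exists_rayleigh_le A j hjn W' hW'rank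
  obtain ⟨y, hyW, hyx⟩ := hxW'
  have hxEy : x = emb g *ᵥ y := by rw [← hyx]; rfl
  have hy0 : y ≠ 0 := by
    intro h
    apply hx0
    rw [hxEy, h, Matrix.mulVec_zero]
  have hnsqy : 0 < nsq y := nsq_pos hy0
  have h1 := hWlow y hyW
  have h2 := nsq_submatrix_le A f g hf y
  have h3 : nsq ((A.submatrix id g) *ᵥ y) = nsq (A *ᵥ x) := by
    rw [hxEy, Matrix.mulVec_mulVec, mul_emb g A]
  have h4 : nsq x = nsq y := by rw [hxEy, nsq_emb g hg]
  rw [h4] at hray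
  have key : (Matrix.isHermitian_conjTranspose_mul_self (A.submatrix f g)).eigenvalues
        (Tuple.sort (Matrix.isHermitian_conjTranspose_mul_self (A.submatrix f g)).eigenvalues
          (Fin.rev ⟨j, hjq⟩)) ≤
      (Matrix.isHermitian_conjTranspose_mul_self A).eigenvalues
        (Tuple.sort (Matrix.isHermitian_conjTranspose_mul_self A).eigenvalues
          (Fin.rev ⟨j, hjn⟩)) := by
    have chain := le_trans h1 (le_trans h2 (le_trans (le_of_eq h3) hray))
    exact le_of_mul_le_mul_right chain hnsqy
  exact Real.sqrt_le_sqrt key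

end
end SvalAux


/-- interlacing, first half: the averaged singular values of submatrices
are dominated by those of the original matrices. -/
theorem stmt_0 (m n p q r : ℕ) (hp : p ≤ m) (hq : q ≤ n) (hr : 0 < r)
    (A : Fin r → Matrix (Fin m) (Fin n) ℂ)
    (f : Fin p → Fin m) (g : Fin q → Fin n) (hf : StrictMono f) (hg : StrictMono g)
    (B : Fin r → Matrix (Fin p) (Fin q) ℂ)
    (hB : ∀ k, B k = (A k).submatrix f g)
    (j : ℕ) (hj : j < min p q) :
    (1 / (r : ℝ)) * ∑ k, sval (B k) ⟨j, by omega⟩ ≤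
      (1 / (r : ℝ)) * ∑ k, sval (A k) ⟨j, by omega⟩ := by
  refine mul_le_mul_of_nonneg_left ?_ (by positivity)
  refine Finset.sum_le_sum fun k _ => ?_
  rw [hB k]
  exact SvalAux.sval_submatrix_le (A k) f g hf.injective hg.injective j (by omega) (by omega)
end

section
/- For matrices U ∈ ℂ^{m×k} and V ∈ ℂ^{n×k} with orthonormal columns (U^*U = I_k, V^*V = I_k) and A ∈ ℂ^{m×n} with k ≤ min(m,n), the i-th largest singular value satisfies σ_i(U^* A V) ≤ σ_i(A) for all i = 1,…,k. -/
open scoped BigOperators Matrix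
open Matrix

noncomputable def csq {N : ℕ} (v : Fin N → ℂ) : ℝ := ∑ j, Complex.normSq (v j)

lemma csq_nonneg {N : ℕ} (v : Fin N → ℂ) : 0 ≤ csq v :=
  Finset.sum_nonneg fun _ _ => Complex.normSq_nonneg _

lemma star_dot_self {N : ℕ} (v : Fin N → ℂ) : star v ⬝ᵥ v = (csq v : ℂ) := by
  simp [dotProduct, csq, Complex.normSq_eq_conj_mul_self, Pi.star_apply]

lemma csq_pos_of_ne_zero {N : ℕ} {v : Fin N → ℂ} (h : v ≠ 0) : 0 < csq v := by
  obtain ⟨j, hj⟩ := Function.ne_iff.mp h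
  exact Finset.sum_pos' (fun _ _ => Complex.normSq_nonneg _)
    ⟨j, Finset.mem_univ _, Complex.normSq_pos.2 hj⟩

lemma csq_mulVec_isometry {N k : ℕ} {V : Matrix (Fin N) (Fin k) ℂ} (hV : Vᴴ * V = 1)
    (x : Fin k → ℂ) : csq (V *ᵥ x) = csq x := by
  have h : star (V *ᵥ x) ⬝ᵥ (V *ᵥ x) = star x ⬝ᵥ x := by
    rw [star_mulVec, dotProduct_mulVec, vecMul_vecMul, hV, vecMul_one]
  rw [star_dot_self, star_dot_self] at h
  exact_mod_cast h

lemma csq_conjTranspose_mulVec_le {M k : ℕ} {U : Matrix (Fin M) (Fin k) ℂ} (hU : Uᴴ * U = 1)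
    (z : Fin M → ℂ) : csq (Uᴴ *ᵥ z) ≤ csq z := by
  set P : Matrix (Fin M) (Fin M) ℂ := U * Uᴴ with hP
  have hPP : P * P = P := by
    rw [hP, Matrix.mul_assoc U Uᴴ (U * Uᴴ), ← Matrix.mul_assoc Uᴴ U Uᴴ, hU, Matrix.one_mul]
  have hPH : Pᴴ = P := by simp [hP]
  have h1 : csq (Uᴴ *ᵥ z) = csq (P *ᵥ z) := by
    have h : star (Uᴴ *ᵥ z) ⬝ᵥ (Uᴴ *ᵥ z) = star (P *ᵥ z) ⬝ᵥ (P *ᵥ z) := by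
      rw [star_mulVec, star_mulVec, dotProduct_mulVec, dotProduct_mulVec,
        vecMul_vecMul, vecMul_vecMul, conjTranspose_conjTranspose, hPH, ← hP, hPP]
    rw [star_dot_self, star_dot_self] at h
    exact_mod_cast h
  have h2 : csq z = csq (P *ᵥ z) + csq ((1 - P) *ᵥ z) := by
    have e1 : star z ⬝ᵥ (P *ᵥ z) = star (P *ᵥ z) ⬝ᵥ (P *ᵥ z) := by
      rw [star_mulVec, dotProduct_mulVec, dotProduct_mulVec, vecMul_vecMul, hPH, hPP]
    have e2 : star z ⬝ᵥ ((1 - P) *ᵥ z) = star ((1 - P) *ᵥ z) ⬝ᵥ ((1 - P) *ᵥ z) := by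
      have hQH : (1 - P)ᴴ = 1 - P := by simp [hPH]
      have hQQ : (1 - P) * (1 - P) = 1 - P := by simp [sub_mul, mul_sub, hPP]
      rw [star_mulVec, dotProduct_mulVec, dotProduct_mulVec, vecMul_vecMul, hQH, hQQ]
    have h : star z ⬝ᵥ z = star (P *ᵥ z) ⬝ᵥ (P *ᵥ z) + star ((1-P) *ᵥ z) ⬝ᵥ ((1-P) *ᵥ z) := by
      rw [← e1, ← e2, ← dotProduct_add, ← add_mulVec]
      simp
    rw [star_dot_self, star_dot_self, star_dot_self] at h
    exact_mod_cast h
  rw [h1, h2]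
  exact le_add_of_nonneg_right (csq_nonneg _)

lemma quad_expand {N : ℕ} {M : Matrix (Fin N) (Fin N) ℂ} (hM : M.IsHermitian) (y : Fin N → ℂ) :
    star y ⬝ᵥ (M *ᵥ y) =
      ((∑ j, hM.eigenvalues j *
          Complex.normSq ((star (hM.eigenvectorUnitary : Matrix (Fin N) (Fin N) ℂ) *ᵥ y) j) : ℝ) : ℂ) := by
  set W : Matrix (Fin N) (Fin N) ℂ := (hM.eigenvectorUnitary : Matrix (Fin N) (Fin N) ℂ) with hW
  set c : Fin N → ℂ := star W *ᵥ y with hc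
  have hdecomp := hM.spectral_theorem
  calc star y ⬝ᵥ (M *ᵥ y)
      = star y ⬝ᵥ ((W * diagonal (RCLike.ofReal ∘ hM.eigenvalues) * star W) *ᵥ y) := by
        rw [Unitary.conjStarAlgAut_apply] at hdecomp
        rw [← hdecomp]
    _ = star c ⬝ᵥ (diagonal (RCLike.ofReal ∘ hM.eigenvalues) *ᵥ c) := by
        rw [← mulVec_mulVec, ← mulVec_mulVec, dotProduct_mulVec (star y)]
        congr 1
        rw [hc, star_mulVec]
        simp [Matrix.star_eq_conjTranspose]
    _ = _ := by
        push_cast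
        simp only [dotProduct, mulVec_diagonal, Function.comp_apply, Pi.star_apply]
        refine Finset.sum_congr rfl fun j _ => ?_
        have h1 : (star (c j) : ℂ) = (starRingEnd ℂ) (c j) := rfl
        rw [h1, Complex.normSq_eq_conj_mul_self]
        exact mul_left_comm ((starRingEnd ℂ) (c j)) ((hM.eigenvalues j : ℂ)) (c j)

lemma sum_le_bound {N : ℕ} (ev w : Fin N → ℝ) (hw : ∀ j, 0 ≤ w j) (t : ℝ)
    (h : ∀ j, t < ev j → w j = 0) : ∑ j, ev j * w j ≤ t * ∑ j, w j := by
  rw [Finset.mul_sum]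
  refine Finset.sum_le_sum fun j _ => ?_
  by_cases hj : t < ev j
  · rw [h j hj]; simp
  · exact mul_le_mul_of_nonneg_right (not_lt.mp hj) (hw j)

lemma sum_ge_bound {N : ℕ} (ev w : Fin N → ℝ) (hw : ∀ j, 0 ≤ w j) (t : ℝ)
    (h : ∀ j, ev j < t → w j = 0) : t * ∑ j, w j ≤ ∑ j, ev j * w j := by
  rw [Finset.mul_sum]
  refine Finset.sum_le_sum fun j _ => ?_
  by_cases hj : ev j < t
  · rw [h j hj]; simp
  · exact mul_le_mul_of_nonneg_right (not_lt.mp hj) (hw j)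

lemma exists_ne_zero_mulVec_eq_zero {K N : ℕ} (h : K < N) (C : Matrix (Fin K) (Fin N) ℂ) :
    ∃ x : Fin N → ℂ, x ≠ 0 ∧ C *ᵥ x = 0 := by
  obtain ⟨x, hxker, hx0⟩ : ∃ x ∈ LinearMap.ker C.mulVecLin, x ≠ 0 := by
    apply Submodule.exists_mem_ne_zero_of_ne_bot
    intro hbot
    have h1 := C.mulVecLin.finrank_range_add_finrank_ker
    rw [hbot, finrank_bot, add_zero] at h1
    have h2 : Module.finrank ℂ (LinearMap.range C.mulVecLin) ≤ K := by
      simpa using Submodule.finrank_le (LinearMap.range C.mulVecLin)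
    simp only [Module.finrank_pi, Fintype.card_fin] at h1
    omega
  exact ⟨x, hx0, hxker⟩

/-- σ_i(Uᴴ A V) ≤ σ_i(A) for matrices with orthonormal columns. -/
theorem stmt_13 (m n k : ℕ) (hk : k ≤ min m n)
    (U : Matrix (Fin m) (Fin k) ℂ) (V : Matrix (Fin n) (Fin k) ℂ)
    (A : Matrix (Fin m) (Fin n) ℂ)
    (hU : Uᴴ * U = 1) (hV : Vᴴ * V = 1) (i : Fin k) :
    sval (Uᴴ * A * V) i ≤ sval A ⟨i, by omega⟩ := by
  have hkn : k ≤ n := le_trans hk (min_le_right _ _)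
  have hik : (i : ℕ) < k := i.isLt
  set B : Matrix (Fin k) (Fin k) ℂ := Uᴴ * A * V with hBdef
  have hB : (Bᴴ * B).IsHermitian := isHermitian_conjTranspose_mul_self B
  have hA : (Aᴴ * A).IsHermitian := isHermitian_conjTranspose_mul_self A
  set τ : Equiv.Perm (Fin k) := Tuple.sort hB.eigenvalues with hτ
  set σ : Equiv.Perm (Fin n) := Tuple.sort hA.eigenvalues with hσ
  set s : ℝ := hB.eigenvalues (τ ⟨k - 1 - i, by omega⟩) with hs
  set t : ℝ := hA.eigenvalues (σ ⟨n - 1 - i, by omega⟩) with ht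
  -- reduce to s ≤ t
  have e1 : sval B i = Real.sqrt s := by
    rw [sval, hs]
    have h : (i : Fin k).rev = (⟨k - 1 - i, by omega⟩ : Fin k) := by
      apply Fin.ext; simp only [Fin.val_rev]; omega
    rw [h, hτ]
  have e2 : sval A ⟨i, by omega⟩ = Real.sqrt t := by
    rw [sval, ht]
    have h : (⟨(i : ℕ), by omega⟩ : Fin n).rev = (⟨n - 1 - i, by omega⟩ : Fin n) := by
      apply Fin.ext; simp only [Fin.val_rev]; omega
    rw [h, hσ]
  rw [e1, e2]
  apply Real.sqrt_le_sqrt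
  -- eigenvector matrices
  set EB : Matrix (Fin k) (Fin k) ℂ := (hB.eigenvectorUnitary : Matrix (Fin k) (Fin k) ℂ) with hEB
  set WA : Matrix (Fin n) (Fin n) ℂ := (hA.eigenvectorUnitary : Matrix (Fin n) (Fin n) ℂ) with hWA
  -- the constraint matrix
  set C : Matrix (Fin (k - 1)) (Fin k) ℂ := Matrix.of (fun j : Fin (k - 1) =>
    if h : (j : ℕ) < k - 1 - i then
      (star EB) (τ ⟨(j : ℕ), by omega⟩)
    else
      (star WA * V) (σ ⟨n - i + ((j : ℕ) - (k - 1 - i)), by have := j.isLt; omega⟩)) with hC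
  obtain ⟨x, hx0, hxker⟩ := exists_ne_zero_mulVec_eq_zero (by omega) C
  have hφx : ∀ j : Fin (k - 1), C j ⬝ᵥ x = 0 := fun j => congrFun hxker j
  -- constraint consequences
  have hctsB : ∀ l, hB.eigenvalues l < s → (star EB *ᵥ x) l = 0 := by
    intro l hl
    obtain ⟨j, hlj⟩ : ∃ j, τ j = l := ⟨τ.symm l, τ.apply_symm_apply l⟩
    have hjlt : (j : ℕ) < k - 1 - i := by
      by_contra hcon
      have hle : (⟨k - 1 - i, by omega⟩ : Fin k) ≤ j := by
        rw [Fin.le_def]; simpa using Nat.le_of_not_lt hcon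
      have hmono := Tuple.monotone_sort hB.eigenvalues hle
      simp only [Function.comp_apply, ← hτ] at hmono
      rw [hlj] at hmono
      exact absurd hl (not_lt.mpr hmono)
    have hrow := hφx ⟨(j : ℕ), by omega⟩
    have hCrow : C (⟨(j : ℕ), by omega⟩ : Fin (k - 1)) = star EB (τ ⟨(j : ℕ), by omega⟩) :=
      dif_pos hjlt
    rw [hCrow] at hrow
    have h2 : (star EB *ᵥ x) (τ ⟨(j : ℕ), by omega⟩) = 0 := hrow
    have hτl : (τ ⟨(j : ℕ), by omega⟩ : Fin k) = l := by
      rw [← hlj]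
    rw [← hτl]
    exact h2
  have hctsA : ∀ l, t < hA.eigenvalues l → (star WA *ᵥ (V *ᵥ x)) l = 0 := by
    intro l hl
    obtain ⟨j, hlj⟩ : ∃ j, σ j = l := ⟨σ.symm l, σ.apply_symm_apply l⟩
    have hjgt : n - 1 - (i : ℕ) < (j : ℕ) := by
      by_contra hcon
      have hle : j ≤ (⟨n - 1 - i, by omega⟩ : Fin n) := by
        rw [Fin.le_def]; simpa using Nat.le_of_not_lt hcon
      have hmono := Tuple.monotone_sort hA.eigenvalues hle
      simp only [Function.comp_apply, ← hσ] at hmono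
      rw [hlj] at hmono
      exact absurd hl (not_lt.mpr hmono)
    have hjn : (j : ℕ) < n := j.isLt
    have hi1 : 1 ≤ (i : ℕ) := by omega
    have hrow := hφx ⟨k - 1 - i + ((j : ℕ) - (n - i)), by omega⟩
    have hCrow : C (⟨k - 1 - i + ((j : ℕ) - (n - i)), by omega⟩ : Fin (k - 1)) =
        (star WA * V) (σ ⟨n - i + ((k - 1 - i + ((j : ℕ) - (n - i))) - (k - 1 - i)), by omega⟩) :=
      dif_neg (not_lt.mpr (Nat.le_add_right _ _))
    rw [hCrow] at hrow
    have hmv : ((star WA * V) *ᵥ x) (σ ⟨n - i + ((k - 1 - i + ((j : ℕ) - (n - i))) - (k - 1 - i)),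
        by omega⟩) = 0 := hrow
    rw [← mulVec_mulVec] at hmv
    have hσl : (σ ⟨n - i + ((k - 1 - i + ((j : ℕ) - (n - i))) - (k - 1 - i)), by omega⟩ : Fin n) = l := by
      rw [← hlj]; congr 1; apply Fin.ext; simp only []; omega
    rw [← hσl]
    exact hmv
  -- the quadratic form chain
  set y : Fin n → ℂ := V *ᵥ x with hy
  have hxpos : 0 < csq x := csq_pos_of_ne_zero hx0
  have hBx : star x ⬝ᵥ ((Bᴴ * B) *ᵥ x) = (csq (B *ᵥ x) : ℂ) := by
    rw [← mulVec_mulVec, dotProduct_mulVec, ← star_mulVec, star_dot_self]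
  have hAy : star y ⬝ᵥ ((Aᴴ * A) *ᵥ y) = (csq (A *ᵥ y) : ℂ) := by
    rw [← mulVec_mulVec, dotProduct_mulVec, ← star_mulVec, star_dot_self]
  have hexpB := quad_expand hB x
  have hexpA := quad_expand hA y
  rw [hBx] at hexpB
  rw [hAy] at hexpA
  have hexpB' : csq (B *ᵥ x) = ∑ j, hB.eigenvalues j * Complex.normSq ((star EB *ᵥ x) j) := by
    exact_mod_cast hexpB
  have hexpA' : csq (A *ᵥ y) = ∑ j, hA.eigenvalues j * Complex.normSq ((star WA *ᵥ y) j) := by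
    exact_mod_cast hexpA
  -- csq preservation
  have hEBunit : (star EB)ᴴ * (star EB) = 1 := by
    rw [Matrix.star_eq_conjTranspose EB, conjTranspose_conjTranspose,
      ← Matrix.star_eq_conjTranspose EB]
    exact Unitary.coe_mul_star_self hB.eigenvectorUnitary
  have hWAunit : (star WA)ᴴ * (star WA) = 1 := by
    rw [Matrix.star_eq_conjTranspose WA, conjTranspose_conjTranspose,
      ← Matrix.star_eq_conjTranspose WA]
    exact Unitary.coe_mul_star_self hA.eigenvectorUnitary
  have hcsqB : csq (star EB *ᵥ x) = csq x := csq_mulVec_isometry hEBunit x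
  have hcsqA : csq (star WA *ᵥ y) = csq y := csq_mulVec_isometry hWAunit y
  have hcsqy : csq y = csq x := csq_mulVec_isometry hV x
  -- lower bound
  have hlow : s * csq x ≤ csq (B *ᵥ x) := by
    rw [hexpB', ← hcsqB]
    exact sum_ge_bound _ _ (fun j => Complex.normSq_nonneg _) s
      (fun j hj => by rw [hctsB j hj]; simp)
  -- middle
  have hmid : csq (B *ᵥ x) ≤ csq (A *ᵥ y) := by
    have hBxe : B *ᵥ x = Uᴴ *ᵥ (A *ᵥ y) := by
      rw [hBdef, hy, mulVec_mulVec, mulVec_mulVec, Matrix.mul_assoc]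
    rw [hBxe]
    exact csq_conjTranspose_mulVec_le hU (A *ᵥ y)
  -- upper bound
  have hupp : csq (A *ᵥ y) ≤ t * csq x := by
    rw [hexpA', ← hcsqy, ← hcsqA]
    exact sum_le_bound _ _ (fun j => Complex.normSq_nonneg _) t
      (fun j hj => by rw [hctsA j hj]; simp)
  have hfin := le_trans hlow (le_trans hmid hupp)
  exact le_of_mul_le_mul_right hfin hxpos
end
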